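/- The discriminant 𝒟_m(b) of D_m(λ, b) with respect to λ is a polynomial in b of degree m(m+1). -/

import Mathlib

open Polynomial

noncomputable def Mmat (m : ℕ) (b : ℂ) : Matrix (Fin (m + 1)) (Fin (m + 1)) ℂ :=
  Matrix.of fun i j =>
    if (i : ℕ) = (j : ℕ) then (4 * ((i : ℕ) : ℂ) + 1) * b
    else if (i : ℕ) = (j : ℕ) + 1 then -((2 * ((i : ℕ) : ℂ) - 1) * (2 * ((i : ℕ) : ℂ)))
    else if (j : ℕ) = (i : ℕ) + 1 then 4 * ((i : ℕ) : ℂ) - 4 * (m : ℂ)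
    else 0

/-- 𝒟_m(b), the discriminant of D_m(λ,b) = det(λI − M_m(b)) with respect to λ,
computed as ∏ over roots r of the characteristic polynomial of its derivative at r. -/
noncomputable def discD (m : ℕ) (b : ℂ) : ℂ :=
  (((Mmat m b).charpoly.roots).map fun r => ((Mmat m b).charpoly.derivative).eval r).prod

namespace Stmt8Aux

open Matrix Finset

/-! ### Generic discriminant-as-product and its polynomiality in a parameter -/

noncomputable def discP (p : ℂ[X]) : ℂ := (p.roots.map fun t => (derivative p).eval t).prod

lemma evalCharpoly {k : ℕ} (M : Matrix (Fin k) (Fin k) ℂ) (t : ℂ) :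
    M.charpoly.eval t = (t • (1 : Matrix (Fin k) (Fin k) ℂ) - M).det := by
  rw [Matrix.charpoly, ← Polynomial.coe_evalRingHom, RingHom.map_det]
  congr 1
  ext i j
  by_cases h : i = j <;>
    simp [h, Matrix.charmatrix_apply_eq, Matrix.charmatrix_apply_ne, Matrix.one_apply,
      Matrix.smul_apply, Matrix.sub_apply]

lemma prod_fn_eq_multiset {k : ℕ} (r : Fin k → ℂ) (g : ℂ → ℂ[X]) :
    (Multiset.map g ↑(List.ofFn r)).prod = ∏ i : Fin k, g (r i) := by
  rw [Multiset.map_coe, List.map_ofFn, Multiset.prod_coe, List.prod_ofFn]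
  rfl

lemma exists_root_fun {k : ℕ} (p : ℂ[X]) (hm : p.Monic) (hd : p.natDegree = k) :
    ∃ r : Fin k → ℂ, p = ∏ i : Fin k, (X - C (r i)) := by
  have hsp : p.roots.card = k := by
    rw [← hd]
    exact (Polynomial.splits_iff_card_roots.mp (IsAlgClosed.splits p))
  set l := p.roots.toList with hldef
  have hlen : l.length = k := by rw [hldef, Multiset.length_toList, hsp]
  refine ⟨fun i => l.get (Fin.cast hlen.symm i), ?_⟩
  have hofn : List.ofFn (fun i : Fin k => l.get (Fin.cast hlen.symm i)) = l := by
    apply List.ext_get (by simp [hlen])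
    intro i h1 h2
    simp [List.get_ofFn]
  have hroots : p.roots = ↑(List.ofFn (fun i : Fin k => l.get (Fin.cast hlen.symm i))) := by
    rw [hofn, hldef, Multiset.coe_toList]
  have h2 := prod_multiset_X_sub_C_of_monic_of_roots_card_eq hm (by rw [hsp, hd])
  rw [← h2, hroots, prod_fn_eq_multiset]

lemma eval_derivative_prod_X_sub_C {k : ℕ} (r : Fin k → ℂ) (i : Fin k) :
    (derivative (∏ j : Fin k, (X - C (r j)))).eval (r i)
      = ∏ j ∈ Finset.univ.erase i, (r i - r j) := by
  classical
  have h1 : (∏ j : Fin k, (X - C (r j))) = (Multiset.map (fun j => X - C (r j)) univ.val).prod :=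
    rfl
  rw [h1, derivative_prod]
  have h2 : ∀ b : Fin k,
      (Multiset.map (fun j => X - C (r j)) (univ.val.erase b)).prod * derivative (X - C (r b))
        = ∏ j ∈ univ.erase b, (X - C (r j)) := by
    intro b
    rw [derivative_X_sub_C, mul_one, ← Finset.erase_val]
    rfl
  rw [Multiset.map_congr rfl (fun b _ => h2 b)]
  have h3 : (Multiset.map (fun b => ∏ j ∈ univ.erase b, (X - C (r j))) univ.val).sum
      = ∑ b : Fin k, ∏ j ∈ univ.erase b, (X - C (r j)) := rfl
  rw [h3, eval_finset_sum, Finset.sum_eq_single i]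
  · simp [eval_prod]
  · intro j _ hji
    rw [eval_prod]
    apply Finset.prod_eq_zero (Finset.mem_erase.mpr ⟨Ne.symm hji, Finset.mem_univ i⟩)
    simp
  · simp

lemma dpoly_eq {k : ℕ} (p : ℂ[X]) (r : Fin k → ℂ) (hp : p = ∏ i : Fin k, (X - C (r i))) :
    discP p = ∏ i : Fin k, ∏ j ∈ Finset.univ.erase i, (r i - r j) := by
  have hroots : p.roots = ↑(List.ofFn r) := by
    rw [hp, ← prod_fn_eq_multiset r (fun a => X - C a)]
    exact roots_multiset_prod_X_sub_C _
  rw [discP, hroots, Multiset.map_coe, List.map_ofFn, Multiset.prod_coe, List.prod_ofFn]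
  refine Finset.prod_congr rfl fun i _ => ?_
  show (derivative p).eval (r i) = _
  rw [hp]
  exact eval_derivative_prod_X_sub_C r i

noncomputable def Dsym (n : ℕ) : MvPolynomial (Fin n) ℂ :=
  ∏ i : Fin n, ∏ j ∈ Finset.univ.erase i, (MvPolynomial.X i - MvPolynomial.X j)

lemma Dsym_isSymmetric (n : ℕ) : (Dsym n).IsSymmetric := by
  intro e
  rw [Dsym, map_prod]
  have h1 : ∀ i : Fin n, (MvPolynomial.rename e) (∏ j ∈ univ.erase i,
        (MvPolynomial.X i - MvPolynomial.X j : MvPolynomial (Fin n) ℂ))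
      = ∏ j ∈ univ.erase (e i), (MvPolynomial.X (e i) - MvPolynomial.X j) := by
    intro i
    rw [map_prod]
    rw [show univ.erase (e i) = (univ.erase i).map e.toEmbedding by
      rw [Finset.map_erase, Finset.map_univ_equiv]; rfl]
    rw [Finset.prod_map]
    simp
  rw [Finset.prod_congr rfl (fun i _ => h1 i)]
  exact Equiv.prod_comp e (fun i => ∏ j ∈ univ.erase i,
    (MvPolynomial.X i - MvPolynomial.X j : MvPolynomial (Fin n) ℂ))

lemma poly_exists (n : ℕ) (N : Matrix (Fin n) (Fin n) (Polynomial ℂ)) :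
    ∃ P : Polynomial ℂ, ∀ b : ℂ,
      P.eval b = discP ((N.map (Polynomial.evalRingHom b)).charpoly) := by
  classical
  obtain ⟨q, hq⟩ := (MvPolynomial.esymmAlgHom_fin_bijective ℂ n).2
    ⟨Dsym n, Dsym_isSymmetric n⟩
  have hqval : MvPolynomial.aeval
      (fun i : Fin n => MvPolynomial.esymm (Fin n) ℂ ((i : ℕ) + 1)) q = Dsym n := by
    have := congrArg Subtype.val hq
    rwa [MvPolynomial.esymmAlgHom_apply] at this
  set c : Fin n → Polynomial ℂ :=
    fun i => (-1) ^ ((i : ℕ) + 1) * N.charpoly.coeff (n - ((i : ℕ) + 1)) with hc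
  refine ⟨MvPolynomial.aeval c q, fun b => ?_⟩
  set M := N.map (Polynomial.evalRingHom b) with hM
  have hmono : M.charpoly.Monic := Matrix.charpoly_monic M
  have hdeg : M.charpoly.natDegree = n := by
    rw [Matrix.charpoly_natDegree_eq_dim, Fintype.card_fin]
  obtain ⟨r, hfact⟩ := exists_root_fun M.charpoly hmono hdeg
  have step1 : Polynomial.eval b (MvPolynomial.aeval c q)
      = MvPolynomial.aeval (fun i => Polynomial.eval b (c i)) q := by
    rw [← Polynomial.coe_aeval_eq_eval]
    have := congrFun (congrArg DFunLike.coe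
      (MvPolynomial.comp_aeval (f := c) (Polynomial.aeval b))) q
    simpa using this
  have hS : (Finset.univ.val.map r : Multiset ℂ) = ↑(List.ofFn r) := by
    simp [List.ofFn_eq_map]
  have step2 : ∀ i : Fin n, Polynomial.eval b (c i)
      = MvPolynomial.aeval r (MvPolynomial.esymm (Fin n) ℂ ((i : ℕ) + 1)) := by
    intro i
    have hcoeff : (M.charpoly).coeff (n - ((i : ℕ) + 1))
        = Polynomial.eval b (N.charpoly.coeff (n - ((i : ℕ) + 1))) := by
      rw [hM, Matrix.charpoly_map, Polynomial.coeff_map]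
      rfl
    have hcard : Multiset.card (↑(List.ofFn r) : Multiset ℂ) = n := by simp
    have hv := Multiset.prod_X_sub_C_coeff (↑(List.ofFn r) : Multiset ℂ)
      (k := n - ((i : ℕ) + 1)) (by rw [hcard]; omega)
    rw [prod_fn_eq_multiset] at hv
    have hni : Multiset.card (↑(List.ofFn r) : Multiset ℂ) - (n - ((i : ℕ) + 1))
        = (i : ℕ) + 1 := by rw [hcard]; have := i.2; omega
    rw [hni, ← hfact] at hv
    rw [hc]
    simp only [Polynomial.eval_mul, Polynomial.eval_pow, Polynomial.eval_neg,
      Polynomial.eval_one, ← hcoeff, hv]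
    rw [MvPolynomial.aeval_esymm_eq_multiset_esymm, hS, ← mul_assoc, ← pow_add]
    rw [Even.neg_one_pow ⟨(i : ℕ) + 1, by ring⟩, one_mul]
  have step5 : MvPolynomial.aeval (fun i => Polynomial.eval b (c i)) q
      = MvPolynomial.aeval r (Dsym n) := by
    rw [funext step2, ← hqval]
    have := congrFun (congrArg DFunLike.coe (MvPolynomial.comp_aeval
      (f := fun i : Fin n => MvPolynomial.esymm (Fin n) ℂ ((i : ℕ) + 1))
      (MvPolynomial.aeval (R := ℂ) r))) q
    simpa using this.symm
  have step6 : MvPolynomial.aeval r (Dsym n)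
      = ∏ i : Fin n, ∏ j ∈ Finset.univ.erase i, (r i - r j) := by
    rw [Dsym, map_prod]
    refine Finset.prod_congr rfl fun i _ => ?_
    rw [map_prod]
    refine Finset.prod_congr rfl fun j _ => ?_
    simp
  rw [step1, step5, step6, dpoly_eq M.charpoly r hfact]

/-! ### The two parameter families -/

noncomputable def Npoly1 (m : ℕ) : Matrix (Fin (m + 1)) (Fin (m + 1)) (Polynomial ℂ) :=
  Matrix.of fun i j =>
    if (i : ℕ) = (j : ℕ) then C (4 * ((i : ℕ) : ℂ) + 1) * X
    else if (i : ℕ) = (j : ℕ) + 1 then C (-((2 * ((i : ℕ) : ℂ) - 1) * (2 * ((i : ℕ) : ℂ))))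
    else if (j : ℕ) = (i : ℕ) + 1 then C (4 * ((i : ℕ) : ℂ) - 4 * (m : ℂ))
    else 0

lemma Npoly1_map (m : ℕ) (b : ℂ) : (Npoly1 m).map (Polynomial.evalRingHom b) = Mmat m b := by
  ext i j
  simp only [Matrix.map_apply, Npoly1, Mmat, Matrix.of_apply]
  split_ifs <;> simp

noncomputable def Npoly2 (m : ℕ) : Matrix (Fin (m + 1)) (Fin (m + 1)) (Polynomial ℂ) :=
  Matrix.of fun i j =>
    if (i : ℕ) = (j : ℕ) then C (4 * ((i : ℕ) : ℂ) + 1)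
    else if (i : ℕ) = (j : ℕ) + 1 then C (-((2 * ((i : ℕ) : ℂ) - 1) * (2 * ((i : ℕ) : ℂ)))) * X
    else if (j : ℕ) = (i : ℕ) + 1 then C (4 * ((i : ℕ) : ℂ) - 4 * (m : ℂ)) * X
    else 0

lemma Npoly2_map (m : ℕ) (c : ℂ) : (Npoly2 m).map (Polynomial.evalRingHom c)
    = Matrix.of fun i j : Fin (m + 1) =>
      if (i : ℕ) = (j : ℕ) then (4 * ((i : ℕ) : ℂ) + 1)
      else if (i : ℕ) = (j : ℕ) + 1 then (-((2 * ((i : ℕ) : ℂ) - 1) * (2 * ((i : ℕ) : ℂ)))) * c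
      else if (j : ℕ) = (i : ℕ) + 1 then (4 * ((i : ℕ) : ℂ) - 4 * (m : ℂ)) * c
      else 0 := by
  ext i j
  simp only [Matrix.map_apply, Npoly2, Matrix.of_apply]
  split_ifs <;> simp

lemma charpoly_diagonal {k : ℕ} (v : Fin k → ℂ) :
    (Matrix.diagonal v).charpoly = ∏ i : Fin k, (X - C (v i)) := by
  rw [Matrix.charpoly]
  have h : Matrix.charmatrix (Matrix.diagonal v)
      = Matrix.diagonal (fun i => (X : ℂ[X]) - C (v i)) := by
    ext i j
    by_cases h : i = j
    · subst h; simp [Matrix.charmatrix_apply_eq]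
    · simp [Matrix.charmatrix_apply_ne _ _ _ h, Matrix.diagonal_apply_ne _ h]
  rw [h, Matrix.det_diagonal]

lemma Npoly2_map_zero (m : ℕ) : (Npoly2 m).map (Polynomial.evalRingHom 0)
    = Matrix.diagonal (fun i : Fin (m + 1) => 4 * ((i : ℕ) : ℂ) + 1) := by
  rw [Npoly2_map]
  ext i j
  by_cases h : i = j
  · subst h; simp
  · have h' : ¬ ((i : ℕ) = (j : ℕ)) := fun hv => h (Fin.ext hv)
    simp only [Matrix.of_apply, Matrix.diagonal_apply_ne _ h, h', if_false]
    split_ifs <;> ring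

lemma eval_reverse {Q : ℂ[X]} {b : ℂ} (hb : b ≠ 0) :
    Q.reverse.eval b = b ^ Q.natDegree * Q.eval b⁻¹ := by
  have : Invertible (b⁻¹ : ℂ) := invertibleOfNonzero (inv_ne_zero hb)
  have h := Polynomial.eval₂_reflect_mul_pow (RingHom.id ℂ) (b⁻¹) Q.natDegree Q le_rfl
  rw [invOf_eq_inv, inv_inv] at h
  rw [Polynomial.eval₂_eq_eval_map, Polynomial.map_id, Polynomial.eval₂_eq_eval_map,
    Polynomial.map_id] at h
  have : Q.reverse.eval b = Q.eval b⁻¹ * ((b⁻¹) ^ Q.natDegree)⁻¹ := by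
    rw [← h, Polynomial.reverse]
    field_simp
  rw [this, inv_pow, inv_inv]
  ring

end Stmt8Aux

/-- 𝒟_m(b) is a polynomial in b of degree m(m+1). -/
theorem stmt8 (m : ℕ) :
    ∃ P : Polynomial ℂ, (∀ b : ℂ, P.eval b = discD m b) ∧ P.natDegree = m * (m + 1) := by
  classical
  open Stmt8Aux Matrix Finset in
  obtain ⟨P, hP⟩ := poly_exists (m + 1) (Npoly1 m)
  obtain ⟨Q, hQ⟩ := poly_exists (m + 1) (Npoly2 m)
  set n : ℕ := m + 1 with hn
  set d : ℕ := n * m with hd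
  have hPval : ∀ b : ℂ, P.eval b = discD m b := by
    intro b
    rw [hP b, Npoly1_map]
    rfl
  -- Q(0) ≠ 0
  have hQ0 : Q.eval 0 ≠ 0 := by
    rw [hQ 0, Npoly2_map_zero,
      dpoly_eq _ _ (Stmt8Aux.charpoly_diagonal (fun i : Fin n => 4 * ((i : ℕ) : ℂ) + 1))]
    rw [Finset.prod_ne_zero_iff]
    intro i _
    rw [Finset.prod_ne_zero_iff]
    intro j hj
    have hij : (i : ℕ) ≠ (j : ℕ) := fun hv => (Finset.mem_erase.mp hj).1 (Fin.ext hv.symm)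
    have : ((i : ℕ) : ℂ) ≠ ((j : ℕ) : ℂ) := fun hv => hij (Nat.cast_injective hv)
    intro hzero
    apply this
    have : 4 * ((i : ℕ) : ℂ) = 4 * ((j : ℕ) : ℂ) := by linear_combination hzero
    linear_combination this / 4
  set e : ℕ := Q.natDegree with he
  -- the key functional relation between P and Q
  have hrel : ∀ b : ℂ, b ≠ 0 → P.eval b = b ^ (m * n) * Q.eval b⁻¹ := by
    intro b hb
    set M2 := (Npoly2 m).map (Polynomial.evalRingHom b⁻¹) with hM2
    obtain ⟨r, hfact2⟩ := exists_root_fun M2.charpoly (Matrix.charpoly_monic M2)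
      (by rw [Matrix.charpoly_natDegree_eq_dim, Fintype.card_fin])
    have hfact1 : (Mmat m b).charpoly = ∏ i : Fin n, (X - C (b * r i)) := by
      apply Polynomial.funext
      intro t
      rw [evalCharpoly]
      have key : t • (1 : Matrix (Fin n) (Fin n) ℂ) - Mmat m b
          = b • ((b⁻¹ * t) • (1 : Matrix (Fin n) (Fin n) ℂ) - M2) := by
        rw [hM2, Npoly2_map]
        ext i j
        by_cases h : i = j
        · subst h
          simp only [Matrix.sub_apply, Matrix.smul_apply, Matrix.one_apply_eq, Mmat,
            Matrix.of_apply, if_pos rfl, smul_eq_mul]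
          field_simp
          rw [if_pos trivial, if_pos trivial]
          ring
        · have h' : ¬ ((i : ℕ) = (j : ℕ)) := fun hv => h (Fin.ext hv)
          simp only [Matrix.sub_apply, Matrix.smul_apply, Matrix.one_apply_ne h, Mmat,
            Matrix.of_apply, if_neg h', smul_eq_mul]
          split_ifs <;> field_simp <;> ring
      rw [key, Matrix.det_smul, ← evalCharpoly, hfact2]
      rw [eval_prod, eval_prod]
      simp only [eval_sub, eval_X, eval_C]
      rw [Fintype.card_fin]
      have hbn : (b : ℂ) ^ (m + 1) = ∏ _i : Fin n, b := by
        simp [Finset.prod_const, hn]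
      rw [hbn, ← Finset.prod_mul_distrib]
      refine Finset.prod_congr rfl fun i _ => ?_
      rw [mul_sub, ← mul_assoc, mul_inv_cancel₀ hb, one_mul]
    have e1 : P.eval b = ∏ i : Fin n, ∏ j ∈ Finset.univ.erase i, (b * r i - b * r j) := by
      rw [hP b, Npoly1_map, dpoly_eq _ _ hfact1]
    have e2 : Q.eval b⁻¹ = ∏ i : Fin n, ∏ j ∈ Finset.univ.erase i, (r i - r j) := by
      rw [hQ b⁻¹, dpoly_eq _ _ hfact2]
    have inner : ∀ i : Fin n, ∏ j ∈ Finset.univ.erase i, (b * r i - b * r j)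
        = b ^ m * ∏ j ∈ Finset.univ.erase i, (r i - r j) := by
      intro i
      have hcard : (Finset.univ.erase i).card = m := by
        rw [Finset.card_erase_of_mem (Finset.mem_univ i), Finset.card_univ, Fintype.card_fin]
        omega
      rw [← hcard, ← Finset.prod_const, ← Finset.prod_mul_distrib]
      exact Finset.prod_congr rfl fun j _ => by ring
    rw [e1, e2, Finset.prod_congr rfl fun i _ => inner i, Finset.prod_mul_distrib,
      Finset.prod_const, Finset.card_univ, Fintype.card_fin, ← pow_mul]
  have hQne : Q ≠ 0 := by
    intro h
    rw [h] at hQ0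
    simp at hQ0
  have H : X ^ e * P = X ^ (m * n) * Q.reverse := by
    apply Polynomial.eq_of_infinite_eval_eq
    apply Set.Infinite.mono (s := {x : ℂ | x ≠ 0})
    · intro x hx
      simp only [Set.mem_setOf_eq] at hx ⊢
      rw [eval_mul, eval_mul, eval_pow, eval_pow, eval_X, hrel x hx, eval_reverse hx, ← he]
      ring
    · have h1 : ({(0 : ℂ)} : Set ℂ).Finite := Set.finite_singleton 0
      have h2 := Set.Finite.infinite_compl h1
      have h3 : ({(0 : ℂ)} : Set ℂ)ᶜ = {x : ℂ | x ≠ 0} := by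
        ext x
        simp
      rwa [h3] at h2
  have hrevne : Q.reverse ≠ 0 := fun h => hQne (Polynomial.reverse_eq_zero.mp h)
  have hPne : P ≠ 0 := by
    intro h
    rw [h, mul_zero] at H
    rcases mul_eq_zero.mp H.symm with h1 | h1
    · exact pow_ne_zero (m * n) Polynomial.X_ne_zero h1
    · exact hrevne h1
  have hrev0 : Q.reverse.natDegree = e := by
    rw [Polynomial.reverse_natDegree]
    have h0 : Q.natTrailingDegree = 0 := Polynomial.natTrailingDegree_eq_zero.mpr
      (Or.inr (by rwa [Polynomial.coeff_zero_eq_eval_zero]))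
    rw [h0, Nat.sub_zero]
  have hdeg := congrArg Polynomial.natDegree H
  rw [Polynomial.natDegree_mul (pow_ne_zero e Polynomial.X_ne_zero) hPne,
    Polynomial.natDegree_mul (pow_ne_zero (m * n) Polynomial.X_ne_zero) hrevne,
    Polynomial.natDegree_X_pow, Polynomial.natDegree_X_pow, hrev0] at hdeg
  have hdn : m * n = m * (m + 1) := rfl
  exact ⟨P, hPval, by omega⟩
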